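/- Let 0 < q < 1, b > 0, n ∈ ℕ⁺, a = b q^n, and let f, g : [a,b] → ℝ with α, β > 1 satisfying 1/α + 1/β = 1. Then (1/α)·G_q(|f|^α;a,b) + (1/β)·G_q(|g|^β;a,b) ≥ (1/(b−a))·G_q(|f|;a,b)·G_q(|g|;a,b), where G_q(h;a,b) = b(1−q)∑_{k=0}^{n−1} h(b q^k) q^k. -/

import Mathlib

open scoped BigOperators

private lemma young_aux {S A B F G α β : ℝ} (hSpos : 0 < S) (hApos : 0 ≤ A) (hBpos : 0 ≤ B)
    (hFpos : 0 ≤ F) (hGpos : 0 ≤ G) (hα : 1 < α) (hβ : 1 < β) (hαβ : 1 / α + 1 / β = 1)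
    (hJf : F ≤ S ^ (1 - α⁻¹) * A ^ α⁻¹) (hJg : G ≤ S ^ (1 - β⁻¹) * B ^ β⁻¹) :
    F * G ≤ S * (A / α + B / β) := by
  have hα0 : α ≠ 0 := by positivity
  have hβ0 : β ≠ 0 := by positivity
  have hconj : α.HolderConjugate β := ⟨by rw [inv_one, ← hαβ]; simp [one_div], by positivity, by positivity⟩
  have hyoung : A ^ α⁻¹ * B ^ β⁻¹ ≤ A / α + B / β := by
    have h := Real.young_inequality_of_nonneg
      (Real.rpow_nonneg hApos α⁻¹) (Real.rpow_nonneg hBpos β⁻¹) hconj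
    rwa [Real.rpow_inv_rpow hApos hα0, Real.rpow_inv_rpow hBpos hβ0] at h
  calc F * G ≤ (S ^ (1 - α⁻¹) * A ^ α⁻¹) * (S ^ (1 - β⁻¹) * B ^ β⁻¹) := by
        apply mul_le_mul hJf hJg hGpos
        positivity
    _ = (S ^ (1 - α⁻¹) * S ^ (1 - β⁻¹)) * (A ^ α⁻¹ * B ^ β⁻¹) := by ring
    _ = S * (A ^ α⁻¹ * B ^ β⁻¹) := by
        rw [← Real.rpow_add hSpos]
        have h1 : (1 - α⁻¹) + (1 - β⁻¹) = 1 := by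
          have : α⁻¹ + β⁻¹ = 1 := by rw [← hαβ]; simp [one_div]
          linarith
        rw [h1, Real.rpow_one]
    _ ≤ S * (A / α + B / β) := mul_le_mul_of_nonneg_left hyoung hSpos.le

private lemma final_aux {S A B F G c α β : ℝ} (hSpos : 0 < S) (hc : 0 < c)
    (hkey : F * G ≤ S * (A / α + B / β)) :
    1 / (c * S) * (c * F) * (c * G) ≤ 1 / α * (c * A) + 1 / β * (c * B) := by
  have hrw : 1 / (c * S) * (c * F) * (c * G) = c * (F * G / S) := by
    field_simp
  rw [hrw]
  have h2 : F * G / S ≤ A / α + B / β := by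
    rw [div_le_iff₀ hSpos]; linarith
  calc c * (F * G / S) ≤ c * (A / α + B / β) := mul_le_mul_of_nonneg_left h2 hc.le
    _ = 1 / α * (c * A) + 1 / β * (c * B) := by ring

/-- Young-type inequality for the restricted q-integral:
`(1/α)G_q(|f|^α) + (1/β)G_q(|g|^β) ≥ (1/(b−a))·G_q(|f|)·G_q(|g|)` with `a = bqⁿ`. -/
theorem q_young_Gq (q b α β : ℝ) (n : ℕ) (f g : ℝ → ℝ) (a : ℝ)
    (hq0 : 0 < q) (hq1 : q < 1) (hb : 0 < b) (hn : 0 < n) (ha : a = b * q ^ n)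
    (hα : 1 < α) (hβ : 1 < β) (hαβ : 1 / α + 1 / β = 1) :
    (1 / α) * (b * (1 - q) * ∑ k ∈ Finset.range n, |f (b * q ^ k)| ^ α * q ^ k) +
        (1 / β) * (b * (1 - q) * ∑ k ∈ Finset.range n, |g (b * q ^ k)| ^ β * q ^ k) ≥
      (1 / (b - a)) * (b * (1 - q) * ∑ k ∈ Finset.range n, |f (b * q ^ k)| * q ^ k) *
        (b * (1 - q) * ∑ k ∈ Finset.range n, |g (b * q ^ k)| * q ^ k) := by
  set S : ℝ := ∑ k ∈ Finset.range n, q ^ k with hS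
  set A : ℝ := ∑ k ∈ Finset.range n, |f (b * q ^ k)| ^ α * q ^ k with hA
  set B : ℝ := ∑ k ∈ Finset.range n, |g (b * q ^ k)| ^ β * q ^ k with hB
  set F : ℝ := ∑ k ∈ Finset.range n, |f (b * q ^ k)| * q ^ k with hF
  set G : ℝ := ∑ k ∈ Finset.range n, |g (b * q ^ k)| * q ^ k with hG
  have hc : (0:ℝ) < b * (1 - q) := by
    have : 0 < 1 - q := by linarith
    positivity
  have hSpos : 0 < S := by
    rw [hS]
    apply Finset.sum_pos (fun k _ => pow_pos hq0 k)
    exact Finset.nonempty_range_iff.mpr hn.ne'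
  have hba : b - a = b * (1 - q) * S := by
    have := geom_sum_mul q n
    rw [ha]
    nlinarith [this]
  have hApos : 0 ≤ A := Finset.sum_nonneg fun k _ => by positivity
  have hBpos : 0 ≤ B := Finset.sum_nonneg fun k _ => by positivity
  have hFpos : 0 ≤ F := Finset.sum_nonneg fun k _ => by positivity
  have hGpos : 0 ≤ G := Finset.sum_nonneg fun k _ => by positivity
  have hJf : F ≤ S ^ (1 - α⁻¹) * A ^ α⁻¹ := by
    have := Real.inner_le_weight_mul_Lp_of_nonneg (Finset.range n) hα.le
      (fun k => q ^ k) (fun k => |f (b * q ^ k)|)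
      (fun k => by positivity) (fun k => abs_nonneg _)
    simpa [hF, hA, mul_comm] using this
  have hJg : G ≤ S ^ (1 - β⁻¹) * B ^ β⁻¹ := by
    have := Real.inner_le_weight_mul_Lp_of_nonneg (Finset.range n) hβ.le
      (fun k => q ^ k) (fun k => |g (b * q ^ k)|)
      (fun k => by positivity) (fun k => abs_nonneg _)
    simpa [hG, hB, mul_comm] using this
  have hkey : F * G ≤ S * (A / α + B / β) :=
    young_aux hSpos hApos hBpos hFpos hGpos hα hβ hαβ hJf hJg
  rw [ge_iff_le, hba]
  exact final_aux hSpos hc hkey
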